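/- Let Δ ⊆ {0,1}^n and, for each i ∈ [p] with p ≤ n, let K_i ⊆ ℝ^{k_i} be a convex cone containing the origin. Assume: (a) for every i ∈ [p] there exists δ ∈ Δ with δ_i = 1; (b) for every i ∈ [p], every α_i ∈ ℝ^{m_i} and every δ_i > 0, if A_i α_i + δ_i · B_i lies in the closure cl(K_i) then it lies in K_i; and (c) B_i ∈ K_i for every i ∈ [p]. Then the closed convex hull of S(Δ, K) equals S(conv(Δ), cl(K)), i.e., cl(conv(S(Δ, K))) is exactly the set obtained from S(conv(Δ), K) by replacing each cone K_i with its closure cl(K_i). -/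

import Mathlib

open scoped Classical

private lemma smul_mem_closure_cone {E : Type*} [AddCommGroup E] [Module ℝ E]
    [TopologicalSpace E] [IsTopologicalAddGroup E] [ContinuousConstSMul ℝ E] {K : Set E}
    (hKcone : ∀ c ∈ K, ∀ lam : ℝ, 0 < lam → lam • c ∈ K) {c : E} (hcc : c ∈ closure K)
    {t : ℝ} (ht : 0 < t) : t • c ∈ closure K := by
  have h1 : t • c ∈ (t • ·) '' closure K := ⟨c, hcc, rfl⟩
  have h2 : (t • ·) '' closure K ⊆ closure ((t • ·) '' K) :=
    image_closure_subset_closure_image (continuous_const_smul t)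
  refine closure_mono ?_ (h2 h1)
  rintro x ⟨y, hy, rfl⟩
  exact hKcone y hy t ht

private lemma add_mem_closure_cone {E : Type*} [AddCommGroup E] [Module ℝ E]
    [TopologicalSpace E] [IsTopologicalAddGroup E] [ContinuousConstSMul ℝ E] {K : Set E}
    (hKconv : Convex ℝ K)
    (hKcone : ∀ c ∈ K, ∀ lam : ℝ, 0 < lam → lam • c ∈ K) {x y : E}
    (hx : x ∈ closure K) (hy : y ∈ closure K) : x + y ∈ closure K := by
  have hmid : (1/2 : ℝ) • x + (1/2 : ℝ) • y ∈ closure K :=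
    hKconv.closure hx hy (by norm_num) (by norm_num) (by norm_num)
  have h2 : (2 : ℝ) • ((1/2 : ℝ) • x + (1/2 : ℝ) • y) ∈ closure K :=
    smul_mem_closure_cone hKcone hmid (by norm_num)
  have : (2 : ℝ) • ((1/2 : ℝ) • x + (1/2 : ℝ) • y) = x + y := by
    rw [smul_add, smul_smul, smul_smul]; norm_num
  rwa [this] at h2

private lemma mem_convexHull_of_pos {n p : ℕ} (hpn : p ≤ n)
    (m k : Fin p → ℕ)
    (A : ∀ i : Fin p, (Fin (m i) → ℝ) →ₗ[ℝ] (Fin (k i) → ℝ))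
    (B : ∀ i : Fin p, Fin (k i) → ℝ)
    (K : ∀ i : Fin p, Set (Fin (k i) → ℝ))
    (Δ : Set (Fin n → ℝ))
    (hΔ : ∀ δ ∈ Δ, ∀ j : Fin n, δ j = 0 ∨ δ j = 1)
    (hK0 : ∀ i, (0 : Fin (k i) → ℝ) ∈ K i)
    (hKcone : ∀ i, ∀ c ∈ K i, ∀ lam : ℝ, 0 < lam → lam • c ∈ K i)
    (α : ∀ i : Fin p, Fin (m i) → ℝ) (δ : Fin n → ℝ)
    (hδ : δ ∈ convexHull ℝ Δ)
    (hpos : ∀ i : Fin p, 0 < δ (Fin.castLE hpn i))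
    (hmem : ∀ i : Fin p, A i (α i) + δ (Fin.castLE hpn i) • B i ∈ K i) :
    (α, δ) ∈ convexHull ℝ {q : (∀ i : Fin p, Fin (m i) → ℝ) × (Fin n → ℝ) |
        q.2 ∈ Δ ∧ ∀ i : Fin p, A i (q.1 i) + q.2 (Fin.castLE hpn i) • B i ∈ K i} := by
  rw [_root_.convexHull_eq] at hδ
  obtain ⟨ι, t, w, z, hw0, hw1, hzΔ, hcm⟩ := hδ
  rw [Finset.centerMass_eq_of_sum_1 _ _ hw1] at hcm
  set β : ι → ∀ i : Fin p, Fin (m i) → ℝ := fun j i =>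
    if z j (Fin.castLE hpn i) = 1 then (δ (Fin.castLE hpn i))⁻¹ • α i else 0 with hβ
  have hδi : ∀ i : Fin p, δ (Fin.castLE hpn i)
      = ∑ j ∈ t, (if z j (Fin.castLE hpn i) = 1 then w j else 0) := by
    intro i
    rw [← hcm]
    rw [Finset.sum_apply]
    refine Finset.sum_congr rfl fun j hj => ?_
    rcases hΔ (z j) (hzΔ j hj) (Fin.castLE hpn i) with h | h <;> simp [h]
  -- membership of each generator
  have hfS : ∀ j ∈ t, (β j, z j) ∈ {q : (∀ i : Fin p, Fin (m i) → ℝ) × (Fin n → ℝ) |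
      q.2 ∈ Δ ∧ ∀ i : Fin p, A i (q.1 i) + q.2 (Fin.castLE hpn i) • B i ∈ K i} := by
    intro j hj
    refine ⟨hzΔ j hj, fun i => ?_⟩
    by_cases h : z j (Fin.castLE hpn i) = 1
    · have hpi := hpos i
      have hne := ne_of_gt hpi
      have hcone := hKcone i _ (hmem i) (δ (Fin.castLE hpn i))⁻¹ (inv_pos.2 hpi)
      have heq : (δ (Fin.castLE hpn i))⁻¹ • (A i (α i) + δ (Fin.castLE hpn i) • B i)
          = A i (β j i) + z j (Fin.castLE hpn i) • B i := by
        simp only [hβ, h, if_true, smul_add, map_smul, smul_smul,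
          inv_mul_cancel₀ hne, one_smul]
      rwa [heq] at hcone
    · rcases hΔ (z j) (hzΔ j hj) (Fin.castLE hpn i) with h0 | h1
      · simpa [hβ, h, h0] using hK0 i
      · exact absurd h1 h
  have hkey := Finset.centerMass_mem_convexHull t hw0 (by rw [hw1]; exact one_pos)
    (z := fun j => (β j, z j)) hfS
  rw [Finset.centerMass_eq_of_sum_1 _ _ hw1] at hkey
  have heq : (∑ j ∈ t, w j • (β j, z j)) = (α, δ) := by
    refine Prod.ext ?_ ?_
    · simp only [Prod.fst_sum, Prod.smul_mk]
      funext i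
      rw [Finset.sum_apply]
      have : ∀ j ∈ t, (w j • β j) i
          = (if z j (Fin.castLE hpn i) = 1 then w j else 0) •
            ((δ (Fin.castLE hpn i))⁻¹ • α i) := by
        intro j hj
        by_cases h : z j (Fin.castLE hpn i) = 1 <;> simp [hβ, h]
      rw [Finset.sum_congr rfl this, ← Finset.sum_smul, ← hδi i, smul_smul,
        mul_inv_cancel₀ (ne_of_gt (hpos i)), one_smul]
    · simp only [Prod.snd_sum, Prod.smul_mk]
      exact hcm
  rwa [heq] at hkey

/-- Closed convex hull of a conic mixed-binary set:
`cl conv(S(Δ, K)) = S(conv(Δ), cl(K))` under the assumptions of the theorem. -/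
theorem closure_convexHull_conic_mixed_binary {n p : ℕ} (hp : 0 < p) (hpn : p ≤ n)
    (m k : Fin p → ℕ)
    (A : ∀ i : Fin p, (Fin (m i) → ℝ) →ₗ[ℝ] (Fin (k i) → ℝ))
    (B : ∀ i : Fin p, Fin (k i) → ℝ)
    (K : ∀ i : Fin p, Set (Fin (k i) → ℝ))
    (Δ : Set (Fin n → ℝ))
    (hΔ : ∀ δ ∈ Δ, ∀ j : Fin n, δ j = 0 ∨ δ j = 1)
    (hKconv : ∀ i, Convex ℝ (K i))
    (hK0 : ∀ i, (0 : Fin (k i) → ℝ) ∈ K i)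
    (hKcone : ∀ i, ∀ c ∈ K i, ∀ lam : ℝ, 0 < lam → lam • c ∈ K i)
    -- (a): for every `i` there is a point of `Δ` whose `i`-th coordinate is `1`
    (ha : ∀ i : Fin p, ∃ δ ∈ Δ, δ (Fin.castLE hpn i) = 1)
    -- (b): for `δ_i > 0`, membership in `cl(K i)` implies membership in `K i`
    (hb : ∀ i : Fin p, ∀ αi : Fin (m i) → ℝ, ∀ t : ℝ, 0 < t →
      A i αi + t • B i ∈ closure (K i) → A i αi + t • B i ∈ K i)
    -- (c): `B i ∈ K i`
    (hc : ∀ i : Fin p, B i ∈ K i) :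
    closure (convexHull ℝ {q : (∀ i : Fin p, Fin (m i) → ℝ) × (Fin n → ℝ) |
        q.2 ∈ Δ ∧ ∀ i : Fin p, A i (q.1 i) + q.2 (Fin.castLE hpn i) • B i ∈ K i})
      = {q : (∀ i : Fin p, Fin (m i) → ℝ) × (Fin n → ℝ) |
        q.2 ∈ convexHull ℝ Δ ∧
          ∀ i : Fin p, A i (q.1 i) + q.2 (Fin.castLE hpn i) • B i ∈ closure (K i)} := by
  set S : Set ((∀ i : Fin p, Fin (m i) → ℝ) × (Fin n → ℝ)) :=
    {q | q.2 ∈ Δ ∧ ∀ i : Fin p, A i (q.1 i) + q.2 (Fin.castLE hpn i) • B i ∈ K i} with hS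
  set T : Set ((∀ i : Fin p, Fin (m i) → ℝ) × (Fin n → ℝ)) :=
    {q | q.2 ∈ convexHull ℝ Δ ∧
      ∀ i : Fin p, A i (q.1 i) + q.2 (Fin.castLE hpn i) • B i ∈ closure (K i)} with hT
  -- Δ is finite
  have hΔfin : Δ.Finite := by
    have hfin : (Set.pi Set.univ (fun _ : Fin n => ({0, 1} : Set ℝ))).Finite :=
      Set.Finite.pi fun _ => (Set.finite_singleton (1 : ℝ)).insert 0
    refine hfin.subset fun δ hδ => ?_
    intro j _
    rcases hΔ δ hδ j with h | h <;> simp [h]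
  -- coordinates of points of conv Δ are nonnegative
  have hnonneg : ∀ γ ∈ convexHull ℝ Δ, ∀ j : Fin n, 0 ≤ γ j := by
    have hsub : convexHull ℝ Δ ⊆ {f : Fin n → ℝ | ∀ j, 0 ≤ f j} := by
      refine convexHull_min (fun f hf j => ?_) ?_
      · rcases hΔ f hf j with h | h <;> simp [h]
      · intro x hx y hy a b ha' hb' _
        intro j
        have : (a • x + b • y) j = a * x j + b * y j := rfl
        rw [this]
        exact add_nonneg (mul_nonneg ha' (hx j)) (mul_nonneg hb' (hy j))
    exact fun γ hγ j => hsub hγ j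
  -- continuity of the constraint maps
  have hcont : ∀ i : Fin p, Continuous fun q : (∀ i : Fin p, Fin (m i) → ℝ) × (Fin n → ℝ) =>
      A i (q.1 i) + q.2 (Fin.castLE hpn i) • B i := by
    intro i
    exact ((A i).continuous_of_finiteDimensional.comp
        ((continuous_apply i).comp continuous_fst)).add
      (((continuous_apply (Fin.castLE hpn i)).comp continuous_snd).smul continuous_const)
  -- T is closed
  have hTclosed : IsClosed T := by
    have h1 : IsClosed {q : (∀ i : Fin p, Fin (m i) → ℝ) × (Fin n → ℝ) |
        q.2 ∈ convexHull ℝ Δ} :=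
      (hΔfin.isClosed_convexHull ℝ).preimage continuous_snd
    have h2 : ∀ i : Fin p, IsClosed {q : (∀ i : Fin p, Fin (m i) → ℝ) × (Fin n → ℝ) |
        A i (q.1 i) + q.2 (Fin.castLE hpn i) • B i ∈ closure (K i)} :=
      fun i => isClosed_closure.preimage (hcont i)
    have hTeq : T = {q : (∀ i : Fin p, Fin (m i) → ℝ) × (Fin n → ℝ) | q.2 ∈ convexHull ℝ Δ}
        ∩ ⋂ i : Fin p, {q : (∀ i : Fin p, Fin (m i) → ℝ) × (Fin n → ℝ) |
          A i (q.1 i) + q.2 (Fin.castLE hpn i) • B i ∈ closure (K i)} := by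
      ext q; simp [hT, Set.mem_iInter]
    rw [hTeq]
    exact h1.inter (isClosed_iInter h2)
  -- T is convex
  have hTconv : Convex ℝ T := by
    intro q hq r hr a b ha' hb' hab
    refine ⟨?_, fun i => ?_⟩
    · exact convex_convexHull ℝ Δ hq.1 hr.1 ha' hb' hab
    · have key : A i ((a • q + b • r).1 i) + (a • q + b • r).2 (Fin.castLE hpn i) • B i
          = a • (A i (q.1 i) + q.2 (Fin.castLE hpn i) • B i)
            + b • (A i (r.1 i) + r.2 (Fin.castLE hpn i) • B i) := by
        show A i (a • q.1 i + b • r.1 i)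
            + (a * q.2 (Fin.castLE hpn i) + b * r.2 (Fin.castLE hpn i)) • B i = _
        rw [map_add, map_smul, map_smul]
        module
      rw [key]
      exact ((hKconv i).closure) (hq.2 i) (hr.2 i) ha' hb' hab
  refine le_antisymm ?_ ?_
  · -- ⊆
    refine closure_minimal (convexHull_min ?_ hTconv) hTclosed
    rintro q ⟨hq1, hq2⟩
    exact ⟨subset_convexHull ℝ Δ hq1, fun i => subset_closure (hq2 i)⟩
  · -- ⊇
    rintro ⟨α, δ⟩ ⟨hδ, hKmem⟩
    choose d hdΔ hd1 using ha
    set δbar : Fin n → ℝ := (p : ℝ)⁻¹ • ∑ i : Fin p, d i with hδbar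
    have hppos : (0 : ℝ) < p := by exact_mod_cast hp
    have hδbarΔ : δbar ∈ convexHull ℝ Δ := by
      have hmem := Finset.centerMass_mem_convexHull (Finset.univ : Finset (Fin p))
        (w := fun _ => (1 : ℝ)) (fun _ _ => zero_le_one)
        (by simpa using hppos) (z := d) (fun i _ => hdΔ i)
      have : (Finset.univ : Finset (Fin p)).centerMass (fun _ => (1 : ℝ)) d = δbar := by
        simp [Finset.centerMass, hδbar]
      rwa [this] at hmem
    have hdnonneg : ∀ j : Fin p, ∀ j' : Fin n, 0 ≤ d j j' := by
      intro j j'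
      rcases hΔ (d j) (hdΔ j) j' with h | h <;> simp [h]
    have hδbarpos : ∀ i : Fin p, 0 < δbar (Fin.castLE hpn i) := by
      intro i
      have h1 : δbar (Fin.castLE hpn i) = (p : ℝ)⁻¹ * ∑ j : Fin p, d j (Fin.castLE hpn i) := by
        simp [hδbar, Finset.sum_apply]
      have h2 : (1 : ℝ) ≤ ∑ j : Fin p, d j (Fin.castLE hpn i) := by
        calc (1 : ℝ) = d i (Fin.castLE hpn i) := (hd1 i).symm
        _ ≤ ∑ j : Fin p, d j (Fin.castLE hpn i) :=
          Finset.single_le_sum (fun j _ => hdnonneg j (Fin.castLE hpn i)) (Finset.mem_univ i)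
      rw [h1]
      positivity
    -- the approximating family
    have hev : ∀ ε ∈ Set.Ioo (0 : ℝ) 1,
        (((1 - ε) • α : ∀ i : Fin p, Fin (m i) → ℝ), (1 - ε) • δ + ε • δbar)
          ∈ convexHull ℝ S := by
      intro ε hε
      obtain ⟨hε0, hε1⟩ := hε
      have h1ε : (0 : ℝ) < 1 - ε := by linarith
      have hcoord : ∀ j : Fin n, ((1 - ε) • δ + ε • δbar) j
          = (1 - ε) * δ j + ε * δbar j := fun _ => rfl
      have hpos : ∀ i : Fin p, 0 < ((1 - ε) • δ + ε • δbar) (Fin.castLE hpn i) := by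
        intro i
        rw [hcoord]
        have := hnonneg δ hδ (Fin.castLE hpn i)
        have := hδbarpos i
        nlinarith
      refine mem_convexHull_of_pos hpn m k A B K Δ hΔ hK0 hKcone _ _ ?_ hpos ?_
      · exact convex_convexHull ℝ Δ hδ hδbarΔ (le_of_lt h1ε) (le_of_lt hε0) (by ring)
      · intro i
        have hsplit : A i (((1 - ε) • α) i)
              + ((1 - ε) • δ + ε • δbar) (Fin.castLE hpn i) • B i
            = (1 - ε) • (A i (α i) + δ (Fin.castLE hpn i) • B i)
              + (ε * δbar (Fin.castLE hpn i)) • B i := by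
          rw [hcoord]
          show A i ((1 - ε) • α i) + _ • B i = _
          rw [map_smul]
          module
        refine hb i _ _ (hpos i) ?_
        rw [hsplit]
        refine add_mem_closure_cone (hKconv i) (hKcone i) ?_ ?_
        · exact smul_mem_closure_cone (hKcone i) (hKmem i) h1ε
        · exact subset_closure (hKcone i (B i) (hc i) _
            (mul_pos hε0 (hδbarpos i)))
    have htend : Filter.Tendsto
        (fun ε : ℝ => (((1 - ε) • α : ∀ i : Fin p, Fin (m i) → ℝ), (1 - ε) • δ + ε • δbar))
        (nhdsWithin 0 (Set.Ioi 0)) (nhds (α, δ)) := by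
      have hcontf : Continuous
          (fun ε : ℝ => (((1 - ε) • α : ∀ i : Fin p, Fin (m i) → ℝ), (1 - ε) • δ + ε • δbar)) := by
        refine Continuous.prodMk ?_ ?_
        · exact (continuous_const.sub continuous_id).smul continuous_const
        · exact (((continuous_const.sub continuous_id).smul continuous_const).add
            (continuous_id.smul continuous_const))
      have h1 := (hcontf.tendsto 0).mono_left
        (nhdsWithin_le_nhds (s := Set.Ioi (0:ℝ)))
      simpa using h1
    refine mem_closure_of_tendsto htend ?_
    filter_upwards [Ioo_mem_nhdsGT_of_mem (Set.mem_Ico.2 ⟨le_refl 0, zero_lt_one⟩)] with ε hε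
    exact hev ε hε
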